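/- Let m ≥ 1 and let A be a real m × m matrix such that: (i) A_{K,L} ≤ 0 for all K ≠ L; (ii) every column sum is zero, i.e. Σ_K A_{K,L} = 0 for all L; (iii) A is irreducible, in the sense that for every nonempty proper subset S of the index set there exist K ∈ S and L ∉ S with A_{K,L} ≠ 0. Then the kernel of A (viewed as a linear map ℝ^m → ℝ^m by matrix-vector multiplication) has dimension 1, and every nonzero vector U in the kernel of A satisfies either U_K > 0 for all K or U_K < 0 for all K. -/

import Mathlib

open Matrix

section Aux

variable {m : ℕ} (A : Matrix (Fin m) (Fin m) ℝ)

private lemma sum_mulVec_zero (hcol : ∀ L : Fin m, ∑ K, A K L = 0)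
    (W : Fin m → ℝ) : ∑ K, (A.mulVec W) K = 0 := by
  simp only [Matrix.mulVec, dotProduct]
  rw [Finset.sum_comm]
  refine Finset.sum_eq_zero fun L _ => ?_
  rw [← Finset.sum_mul, hcol L, zero_mul]

private lemma ker_abs (hoff : ∀ K L : Fin m, K ≠ L → A K L ≤ 0)
    (hcol : ∀ L : Fin m, ∑ K, A K L = 0)
    {U : Fin m → ℝ} (hU : A.mulVec U = 0) :
    A.mulVec (fun K => |U K|) = 0 := by
  have hUK : ∀ K, ∑ L, A K L * U L = 0 := by
    intro K
    have := congrFun hU K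
    simpa [Matrix.mulVec, dotProduct] using this
  have hnonpos : ∀ K, (A.mulVec (fun K => |U K|)) K ≤ 0 := by
    intro K
    have hval : (A.mulVec (fun K => |U K|)) K = ∑ L, A K L * |U L| := by
      simp [Matrix.mulVec, dotProduct]
    rw [hval]
    rcases le_or_gt 0 (U K) with h | h
    · have heq : ∑ L, A K L * |U L| = ∑ L, A K L * (|U L| - U L) := by
        simp only [mul_sub, Finset.sum_sub_distrib, hUK K, sub_zero]
      rw [heq]
      refine Finset.sum_nonpos fun L _ => ?_
      by_cases hKL : L = K
      · subst hKL; rw [abs_of_nonneg h]; simp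
      · have h1 := hoff K L (fun hh => hKL hh.symm)
        have h2 : 0 ≤ |U L| - U L := by
          have := neg_abs_le (U L); have := le_abs_self (U L); linarith
        nlinarith
    · have heq : ∑ L, A K L * |U L| = ∑ L, A K L * (|U L| + U L) := by
        simp only [mul_add, Finset.sum_add_distrib, hUK K, add_zero]
      rw [heq]
      refine Finset.sum_nonpos fun L _ => ?_
      by_cases hKL : L = K
      · subst hKL; rw [abs_of_neg h]; simp
      · have h1 := hoff K L (fun hh => hKL hh.symm)
        have h2 : 0 ≤ |U L| + U L := by
          have := neg_abs_le (U L); linarith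
        nlinarith
  have hsum := sum_mulVec_zero A hcol (fun K => |U K|)
  funext K
  have hzero := (Finset.sum_eq_zero_iff_of_nonpos (fun J _ => hnonpos J)).mp hsum
  simpa using hzero K (Finset.mem_univ K)

private lemma ker_pos (hoff : ∀ K L : Fin m, K ≠ L → A K L ≤ 0)
    (hirr : ∀ S : Set (Fin m), S.Nonempty → S ≠ Set.univ →
      ∃ K ∈ S, ∃ L ∉ S, A K L ≠ 0)
    {W : Fin m → ℝ} (hW : A.mulVec W = 0) (hnn : ∀ K, 0 ≤ W K) (hne : W ≠ 0) :
    ∀ K, 0 < W K := by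
  by_contra hcon
  push_neg at hcon
  obtain ⟨K0, hK0⟩ := hcon
  have hK0' : W K0 = 0 := le_antisymm hK0 (hnn K0)
  set S : Set (Fin m) := {K | W K = 0} with hS
  have hSne : S.Nonempty := ⟨K0, hK0'⟩
  have hSuniv : S ≠ Set.univ := by
    intro h
    apply hne
    funext J
    have : J ∈ S := h ▸ Set.mem_univ J
    exact this
  obtain ⟨K, hK, L, hL, hAKL⟩ := hirr S hSne hSuniv
  have hKL : K ≠ L := by
    intro h; subst h; exact hL hK
  have hWK : W K = 0 := hK
  have hWL : 0 < W L := lt_of_le_of_ne (hnn L) (fun h => hL h.symm)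
  have hUK : ∑ J, A K J * W J = 0 := by
    have := congrFun hW K
    simpa [Matrix.mulVec, dotProduct] using this
  have hterm : A K L * W L < 0 := by
    have : A K L < 0 := lt_of_le_of_ne (hoff K L hKL) hAKL
    exact mul_neg_of_neg_of_pos this hWL
  have hzero := (Finset.sum_eq_zero_iff_of_nonpos ?_).mp hUK L (Finset.mem_univ L)
  · linarith
  · intro J _
    by_cases hJK : J = K
    · subst hJK; rw [hWK, mul_zero]
    · exact mul_nonpos_iff.2 (Or.inr ⟨hoff K J (fun h => hJK h.symm), hnn J⟩)

private lemma ker_sign (hoff : ∀ K L : Fin m, K ≠ L → A K L ≤ 0)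
    (hcol : ∀ L : Fin m, ∑ K, A K L = 0)
    (hirr : ∀ S : Set (Fin m), S.Nonempty → S ≠ Set.univ →
      ∃ K ∈ S, ∃ L ∉ S, A K L ≠ 0)
    {U : Fin m → ℝ} (hU : A.mulVec U = 0) (hne : U ≠ 0) :
    (∀ K, U K > 0) ∨ (∀ K, U K < 0) := by
  have habs : A.mulVec (fun K => |U K|) = 0 := ker_abs A hoff hcol hU
  have habsne : (fun K => |U K|) ≠ 0 := by
    intro h
    apply hne
    funext K
    have := congrFun h K
    simpa [abs_eq_zero] using this
  have hpos : ∀ K, 0 < |U K| :=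
    ker_pos A hoff hirr habs (fun K => abs_nonneg _) habsne
  by_cases hall : ∀ K, 0 < U K
  · exact Or.inl hall
  · push_neg at hall
    obtain ⟨K0, hK0⟩ := hall
    have hK0neg : U K0 < 0 := lt_of_le_of_ne hK0 (fun h => (hpos K0).ne' (by rw [h]; simp))
    right
    intro K
    by_contra hKpos
    push_neg at hKpos
    have hKpos' : 0 < U K := lt_of_le_of_ne hKpos (fun h => (hpos K).ne' (by rw [← h]; simp))
    -- V = U + |U| is in the kernel, nonnegative, nonzero, but vanishes at K0
    set V : Fin m → ℝ := fun J => U J + |U J| with hV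
    have hVker : A.mulVec V = 0 := by
      have : A.mulVec V = A.mulVec U + A.mulVec (fun K => |U K|) := by
        rw [hV]
        rw [show (fun J => U J + |U J|) = U + (fun K => |U K|) from rfl]
        exact A.mulVec_add U _
      rw [this, hU, habs, add_zero]
    have hVnn : ∀ J, 0 ≤ V J := fun J => by
      have := neg_abs_le (U J); simp only [hV]; linarith
    have hVne : V ≠ 0 := by
      intro h
      have := congrFun h K
      simp only [hV, Pi.zero_apply] at this
      have := abs_of_pos hKpos'
      linarith [congrFun h K, abs_of_pos hKpos']
    have := ker_pos A hoff hirr hVker hVnn hVne K0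
    have : V K0 = 0 := by simp only [hV]; rw [abs_of_neg hK0neg]; ring
    linarith [ker_pos A hoff hirr hVker hVnn hVne K0]

end Aux

/-- For a real `m × m` matrix with nonpositive off-diagonal entries, zero column
sums, and irreducible (every nonempty proper subset of indices has an outgoing
nonzero entry), the kernel of `A` is one-dimensional and every nonzero kernel
vector has all entries positive or all entries negative. -/
theorem kernel_dim_one_and_sign
    (m : ℕ) (hm : 1 ≤ m) (A : Matrix (Fin m) (Fin m) ℝ)
    (hoff : ∀ K L : Fin m, K ≠ L → A K L ≤ 0)
    (hcol : ∀ L : Fin m, ∑ K, A K L = 0)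
    (hirr : ∀ S : Set (Fin m), S.Nonempty → S ≠ Set.univ →
      ∃ K ∈ S, ∃ L ∉ S, A K L ≠ 0) :
    Module.finrank ℝ (LinearMap.ker A.mulVecLin) = 1 ∧
    ∀ U : Fin m → ℝ, A.mulVec U = 0 → U ≠ 0 →
      (∀ K, U K > 0) ∨ (∀ K, U K < 0) := by
  have K0 : Fin m := ⟨0, hm⟩
  -- existence of a nonzero kernel vector
  have hdetT : Aᵀ.det = 0 := by
    rw [← Matrix.exists_mulVec_eq_zero_iff]
    refine ⟨1, ?_, ?_⟩
    · intro h
      have := congrFun h K0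
      simp at this
    · funext L
      simp [Matrix.mulVec, dotProduct, Matrix.transpose_apply, hcol L]
  have hdet : A.det = 0 := by rwa [Matrix.det_transpose] at hdetT
  obtain ⟨v, hvne, hv⟩ := (Matrix.exists_mulVec_eq_zero_iff).2 hdet
  have hvsign := ker_sign A hoff hcol hirr hv hvne
  have hv0 : v K0 ≠ 0 := by
    rcases hvsign with h | h
    · exact (h K0).ne'
    · exact (h K0).ne
  constructor
  · have hker : LinearMap.ker A.mulVecLin = Submodule.span ℝ {v} := by
      apply le_antisymm
      · intro U hU
        rw [LinearMap.mem_ker, Matrix.mulVecLin_apply] at hU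
        rw [Submodule.mem_span_singleton]
        refine ⟨U K0 / v K0, ?_⟩
        by_contra hne
        set W : Fin m → ℝ := U - (U K0 / v K0) • v with hW
        have hWker : A.mulVec W = 0 := by
          rw [hW]
          rw [Matrix.mulVec_sub, Matrix.mulVec_smul, hU, hv, smul_zero, sub_zero]
        have hWne : W ≠ 0 := by
          intro h
          apply hne
          have : U - (U K0 / v K0) • v = 0 := h
          have := sub_eq_zero.mp this
          exact this.symm
        have hWK0 : W K0 = 0 := by
          simp only [hW, Pi.sub_apply, Pi.smul_apply, smul_eq_mul]
          field_simp
          ring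
        rcases ker_sign A hoff hcol hirr hWker hWne with h | h
        · exact (h K0).ne' hWK0
        · exact (h K0).ne hWK0
      · rw [Submodule.span_le, Set.singleton_subset_iff]
        rw [SetLike.mem_coe, LinearMap.mem_ker, Matrix.mulVecLin_apply]
        exact hv
    rw [hker]
    exact finrank_span_singleton hvne
  · exact fun U hU hUne => ker_sign A hoff hcol hirr hU hUne
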